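/- arXiv:1808.08810 — 2 statements merged into one kernel-verified Lean document; each statement's English description precedes it below -/
import Mathlib

section
/- Let f : G → H be a bounded continuous frame with ‖f_g‖ ≤ C and frame bounds A, B. Let ψ ∈ L¹(G) ∩ L^∞(G) with 0 ≤ ψ ≤ 1 and ‖ψ‖₁ < ∞, let F ∈ L²(G), and let g¹,…,g^K be i.i.d. samples from the density ψ/‖ψ‖₁. Define the Monte Carlo synthesis V_f^{*K} F = (‖ψ‖₁/K) Σ_{k=1}^K F(g^k) f_{g^k}. Then 𝔼(‖V_f^{*K} F − V_f*(ψF)‖²_H) ≤ (‖ψ‖₁/K) A⁻¹ B C² ‖F‖₂². -/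
open MeasureTheory
open scoped InnerProductSpace NNReal ENNReal

section MCAux
variable {G : Type*} [MeasurableSpace G] {μ : Measure G} {ψ : G → ℝ}

lemma mc_integral_nu {E : Type*} [NormedAddCommGroup E] [NormedSpace ℝ E]
    (hψ0 : ∀ g, 0 ≤ ψ g) (hψm : AEMeasurable ψ μ) {I : ℝ} (hI : 0 < I) (h : G → E) :
    ∫ x, h x ∂((ENNReal.ofReal I)⁻¹ • μ.withDensity (fun g => ENNReal.ofReal (ψ g)))
      = I⁻¹ • ∫ g, ψ g • h g ∂μ := by
  have hfun : ∀ g : G, (Real.toNNReal (ψ g)) • h g = ψ g • h g := fun g => by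
    rw [NNReal.smul_def, Real.coe_toNNReal _ (hψ0 g)]
  rw [integral_smul_measure,
    show (fun g => ENNReal.ofReal (ψ g)) = (fun g => ((Real.toNNReal (ψ g) : ℝ≥0) : ℝ≥0∞)) from rfl,
    integral_withDensity_eq_integral_smul₀ (f := fun g => Real.toNNReal (ψ g)) (measurable_real_toNNReal.comp_aemeasurable hψm)]
  simp_rw [hfun]
  congr 1
  rw [ENNReal.toReal_inv, ENNReal.toReal_ofReal hI.le]

lemma mc_integrable_nu {E : Type*} [NormedAddCommGroup E] [NormedSpace ℝ E]
    (hψ0 : ∀ g, 0 ≤ ψ g) (hψm : AEMeasurable ψ μ) {I : ℝ} (hI : 0 < I) (h : G → E) :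
    Integrable h ((ENNReal.ofReal I)⁻¹ • μ.withDensity (fun g => ENNReal.ofReal (ψ g)))
      ↔ Integrable (fun g => ψ g • h g) μ := by
  have hfun : (fun g : G => (Real.toNNReal (ψ g)) • h g) = fun g => ψ g • h g := funext fun g => by
    rw [NNReal.smul_def, Real.coe_toNNReal _ (hψ0 g)]
  rw [integrable_smul_measure (ENNReal.inv_ne_zero.2 ENNReal.ofReal_ne_top)
      (by simp [ENNReal.ofReal_eq_zero, not_le, hI]),
    show (fun g => ENNReal.ofReal (ψ g)) = (fun g => ((Real.toNNReal (ψ g) : ℝ≥0) : ℝ≥0∞)) from rfl,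
    integrable_withDensity_iff_integrable_smul₀ (f := fun g => Real.toNNReal (ψ g)) (measurable_real_toNNReal.comp_aemeasurable hψm),
    hfun]

end MCAux

lemma mc_comp {Ω G E : Type*} [MeasurableSpace Ω] [MeasurableSpace G] [NormedAddCommGroup E] [NormedSpace ℝ E]
    {P : Measure Ω} {gk : Ω → G} (hg : Measurable gk) {ν : Measure G}
    (hlaw : Measure.map gk P = ν) {h : G → E} (hsm : StronglyMeasurable h) :
    (∫ ω, h (gk ω) ∂P = ∫ x, h x ∂ν) ∧ (Integrable h ν → Integrable (fun ω => h (gk ω)) P) := by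
  constructor
  · rw [← hlaw, integral_map hg.aemeasurable hsm.aestronglyMeasurable]
  · intro hint
    rw [← hlaw] at hint
    exact (integrable_map_measure hsm.aestronglyMeasurable hg.aemeasurable).1 hint

set_option maxHeartbeats 2000000 in
/-- **Monte Carlo synthesis approximation rate.** For a bounded continuous
frame `f` with bounds `A, B` and `‖f_g‖ ≤ C`, an envelope `ψ` with `0 ≤ ψ ≤ 1` and
`‖ψ‖₁ < ∞`, `F ∈ L²(G)`, and i.i.d. samples `g¹,…,g^K` drawn from the density `ψ/‖ψ‖₁`, the
Monte Carlo synthesis `V_f^{*K} F = (‖ψ‖₁/K) ∑ₖ F(gᵏ) f_{gᵏ}` satisfies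
`𝔼 ‖V_f^{*K}F − V_f^*(ψF)‖² ≤ (‖ψ‖₁/K) A⁻¹ B C² ‖F‖₂²`. -/
theorem monteCarlo_synthesis_expected_sq_error
    {H : Type*} [NormedAddCommGroup H] [InnerProductSpace ℂ H] [CompleteSpace H]
    {G : Type*} [MeasurableSpace G] (μ : Measure G) [SigmaFinite μ]
    (f : G → H) (A B C : ℝ) (hA : 0 < A) (hAB : A ≤ B) (hC : 0 ≤ C)
    (hfmeas : AEStronglyMeasurable f μ) (hfC : ∀ g, ‖f g‖ ≤ C)
    (hVmeas : ∀ s : H, AEStronglyMeasurable (fun g => (⟪f g, s⟫_ℂ : ℂ)) μ)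
    (hlow : ∀ s : H, A * ‖s‖ ^ 2 ≤ ∫ g, ‖(⟪f g, s⟫_ℂ : ℂ)‖ ^ 2 ∂μ)
    (hup : ∀ s : H, ∫ g, ‖(⟪f g, s⟫_ℂ : ℂ)‖ ^ 2 ∂μ ≤ B * ‖s‖ ^ 2)
    (ψ : G → ℝ) (hψ0 : ∀ g, 0 ≤ ψ g) (hψ1 : ∀ g, ψ g ≤ 1) (hψint : Integrable ψ μ)
    (F : G → ℂ) (hF : MemLp F 2 μ)
    (VstarψF : H)
    (hVstar : ∀ q : H, (⟪VstarψF, q⟫_ℂ : ℂ) =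
      ∫ g, (starRingEnd ℂ) ((ψ g : ℂ) * F g) * ⟪f g, q⟫_ℂ ∂μ)
    {Ω : Type*} [MeasurableSpace Ω] (P : Measure Ω) [IsProbabilityMeasure P]
    (K : ℕ) (hK : 0 < K) (gs : Fin K → Ω → G)
    (hgsmeas : ∀ k, Measurable (gs k))
    (hgsindep : ProbabilityTheory.iIndepFun gs P)
    (hlaw : ∀ k, Measure.map (gs k) P =
      (ENNReal.ofReal (∫ g, ψ g ∂μ))⁻¹ • μ.withDensity (fun g => ENNReal.ofReal (ψ g))) :
    ∫ ω, ‖(((∫ g, ψ g ∂μ) / K : ℝ) • ∑ k, F (gs k ω) • f (gs k ω)) - VstarψF‖ ^ 2 ∂P ≤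
      ((∫ g, ψ g ∂μ) / K) * A⁻¹ * B * C ^ 2 * ∫ g, ‖F g‖ ^ 2 ∂μ := by
  classical
  set I : ℝ := ∫ g, ψ g ∂μ with hIdef
  set ν : Measure G := (ENNReal.ofReal I)⁻¹ • μ.withDensity (fun g => ENNReal.ofReal (ψ g))
    with hνdef
  have hψm : AEMeasurable ψ μ := hψint.aemeasurable
  let k0 : Fin K := ⟨0, hK⟩
  have hνprob : IsProbabilityMeasure ν := by
    rw [← hlaw k0]; exact Measure.isProbabilityMeasure_map (hgsmeas k0).aemeasurable
  have hI : 0 < I := by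
    rcases lt_or_eq_of_le (integral_nonneg (f := ψ) hψ0) with h | h
    · exact h
    · exfalso
      have hψ0' : ψ =ᵐ[μ] 0 := by
        rw [← integral_eq_zero_iff_of_nonneg hψ0 hψint]
        exact h.symm
      have hz : ν = 0 := by
        rw [hνdef, withDensity_congr_ae (f := fun g => ENNReal.ofReal (ψ g)) (g := fun _ => 0)
          (by filter_upwards [hψ0'] with g hg; simp [hg])]
        simp
      exact hνprob.ne_zero _ hz
  have hK' : (0 : ℝ) < K := by exact_mod_cast hK
  obtain ⟨f', hf'sm, hff'⟩ := hfmeas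
  obtain ⟨F', hF'sm, hFF'⟩ := hF.1
  set φ : G → H := fun g => F' g • f' g with hφdef
  have hφsm : StronglyMeasurable φ := hF'sm.smul hf'sm
  have hνac : ν ≪ μ := by
    have h1 : ν ≪ μ.withDensity (fun g => ENNReal.ofReal (ψ g)) :=
      Measure.smul_absolutelyContinuous
    exact h1.trans (withDensity_absolutelyContinuous μ _)
  have hφae : (fun g => F g • f g) =ᵐ[μ] φ := hFF'.smul hff'
  have hf'C : ∀ᵐ g ∂μ, ‖f' g‖ ≤ C := by
    filter_upwards [hff'] with g hg; rw [← hg]; exact hfC g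
  have hF'norm : ∀ᵐ g ∂μ, ‖F' g‖ = ‖F g‖ := by
    filter_upwards [hFF'] with g hg; rw [hg]
  have hF2 : Integrable (fun g => ‖F g‖ ^ 2) μ := by
    have := hF.integrable_norm_rpow (by norm_num) (by norm_num)
    simpa [ENNReal.toReal_ofNat, Real.rpow_natCast] using this
  -- integrability of ψ • φ over μ
  have hψφsm : AEStronglyMeasurable (fun g => ψ g • φ g) μ :=
    hψint.1.smul hφsm.aestronglyMeasurable
  have hbound1 : ∀ᵐ g ∂μ, ‖ψ g • φ g‖ ≤ C * (ψ g + ‖F g‖ ^ 2) := by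
    filter_upwards [hf'C, hF'norm] with g h1 h2
    have hψg := hψ0 g; have hψg1 := hψ1 g
    have hFg : (0:ℝ) ≤ ‖F g‖ := norm_nonneg _
    have h3 : ‖ψ g • φ g‖ = ψ g * (‖F' g‖ * ‖f' g‖) := by
      rw [norm_smul, norm_smul, Real.norm_of_nonneg hψg]
    rw [h3, h2]
    have h4 : ψ g * (‖F g‖ * ‖f' g‖) ≤ ψ g * (‖F g‖ * C) := by
      have := norm_nonneg (f' g)
      gcongr
    refine h4.trans ?_
    have h5 : ψ g * ‖F g‖ ≤ ψ g + ‖F g‖ ^ 2 := by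
      rcases le_total (‖F g‖) 1 with hb | hb
      · nlinarith
      · nlinarith
    calc ψ g * (‖F g‖ * C) = C * (ψ g * ‖F g‖) := by ring
      _ ≤ C * (ψ g + ‖F g‖ ^ 2) := mul_le_mul_of_nonneg_left h5 hC
  have hψφint : Integrable (fun g => ψ g • φ g) μ :=
    Integrable.mono' ((hψint.add hF2).const_mul C) hψφsm hbound1
  -- mean identity
  have hmean : ∫ g, ψ g • φ g ∂μ = VstarψF := by
    apply ext_inner_right ℂ
    intro q
    rw [hVstar q]
    have h1 : (⟪∫ g, ψ g • φ g ∂μ, q⟫_ℂ) = ∫ g, ⟪ψ g • φ g, q⟫_ℂ ∂μ := by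
      rw [← inner_conj_symm, ← integral_inner hψφint q, ← integral_conj]
      simp_rw [inner_conj_symm]
    rw [h1]
    apply integral_congr_ae
    filter_upwards [hff', hFF'] with g hg hgF
    simp only [hφdef, ← hg, ← hgF]
    rw [RCLike.real_smul_eq_coe_smul (K := ℂ), inner_smul_real_left, inner_smul_left,
      Complex.real_smul]
    simp only [map_mul, Complex.conj_ofReal]
    ring
  set m : H := I⁻¹ • VstarψF with hmdef
  set ξ : G → H := fun g => φ g - m with hξdef
  have hξsm : StronglyMeasurable ξ := hφsm.sub stronglyMeasurable_const
  have hφν : Integrable φ ν := (mc_integrable_nu hψ0 hψm hI φ).2 hψφint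
  have hφνint : ∫ g, φ g ∂ν = m := by
    rw [hνdef, mc_integral_nu hψ0 hψm hI φ, hmean]
  have hmint : Integrable (fun _ : G => m) ν := integrable_const m
  have hξν : Integrable ξ ν := hφν.sub hmint
  have hξmean : ∫ g, ξ g ∂ν = 0 := by
    have : ∫ g, ξ g ∂ν = (∫ g, φ g ∂ν) - ∫ _, m ∂ν := integral_sub hφν hmint
    rw [this, hφνint, integral_const, probReal_univ, one_smul, sub_self]
  have hψφ2int : Integrable (fun g => ψ g • ‖φ g‖ ^ 2) μ := by
    apply Integrable.mono' (hF2.const_mul (C ^ 2))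
      (hψint.1.smul ((continuous_pow 2).comp_stronglyMeasurable hφsm.norm).aestronglyMeasurable)
    filter_upwards [hf'C, hF'norm] with g h1 h2
    have hψg := hψ0 g; have hψg1 := hψ1 g
    have hφle : ‖φ g‖ ≤ ‖F g‖ * C := by
      have : ‖φ g‖ = ‖F' g‖ * ‖f' g‖ := norm_smul _ _
      rw [this, h2]
      have := norm_nonneg (F g)
      gcongr
    have hφ2le : ‖φ g‖ ^ 2 ≤ (‖F g‖ * C) ^ 2 := by
      have := norm_nonneg (φ g)
      gcongr
    have hn : ‖ψ g • ‖φ g‖ ^ 2‖ = ψ g * ‖φ g‖ ^ 2 := by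
      rw [smul_eq_mul, Real.norm_of_nonneg (by positivity)]
    rw [show (ψ • fun x => ‖φ x‖ ^ 2) g = ψ g • ‖φ g‖ ^ 2 from rfl, hn]
    nlinarith [sq_nonneg (‖φ g‖), norm_nonneg (φ g)]
  have hφ2ν : Integrable (fun g => ‖φ g‖ ^ 2) ν := (mc_integrable_nu hψ0 hψm hI _).2 hψφ2int
  have hφ2val : ∫ g, ‖φ g‖ ^ 2 ∂ν ≤ I⁻¹ * (C ^ 2 * ∫ g, ‖F g‖ ^ 2 ∂μ) := by
    rw [hνdef, mc_integral_nu hψ0 hψm hI]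
    have hmono : ∫ g, ψ g • ‖φ g‖ ^ 2 ∂μ ≤ ∫ g, C ^ 2 * ‖F g‖ ^ 2 ∂μ := by
      apply integral_mono_ae hψφ2int (hF2.const_mul _)
      filter_upwards [hf'C, hF'norm] with g h1 h2
      have hψg := hψ0 g; have hψg1 := hψ1 g
      have hφle : ‖φ g‖ ≤ ‖F g‖ * C := by
        have : ‖φ g‖ = ‖F' g‖ * ‖f' g‖ := norm_smul _ _
        rw [this, h2]
        have := norm_nonneg (F g)
        gcongr
      have hφ2le : ‖φ g‖ ^ 2 ≤ (‖F g‖ * C) ^ 2 := by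
        have := norm_nonneg (φ g)
        gcongr
      rw [smul_eq_mul]
      nlinarith [sq_nonneg (‖φ g‖), norm_nonneg (φ g)]
    rw [smul_eq_mul]
    have h2 : ∫ g, C ^ 2 * ‖F g‖ ^ 2 ∂μ = C ^ 2 * ∫ g, ‖F g‖ ^ 2 ∂μ := by
      rw [integral_const_mul]
    rw [← h2]
    exact mul_le_mul_of_nonneg_left hmono (inv_nonneg.2 hI.le)
  have hφm_int : Integrable (fun g => (⟪φ g, m⟫_ℂ)) ν := by
    apply Integrable.mono' (hφν.norm.mul_const ‖m‖)
      (((continuous_id.inner continuous_const).comp_stronglyMeasurable hφsm).aestronglyMeasurable)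
    exact Filter.Eventually.of_forall fun g => norm_inner_le_norm _ _
  have hinnerν : Integrable (fun g => RCLike.re (⟪φ g, m⟫_ℂ)) ν := hφm_int.re
  have hinnerval : ∫ g, RCLike.re (⟪φ g, m⟫_ℂ) ∂ν = ‖m‖ ^ 2 := by
    have h1 : ∫ g, (⟪φ g, m⟫_ℂ) ∂ν = ⟪(∫ g, φ g ∂ν), m⟫_ℂ := by
      calc ∫ g, (⟪φ g, m⟫_ℂ) ∂ν = ∫ g, (starRingEnd ℂ) (⟪m, φ g⟫_ℂ) ∂ν := by
            simp_rw [inner_conj_symm]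
        _ = (starRingEnd ℂ) (∫ g, (⟪m, φ g⟫_ℂ) ∂ν) := integral_conj
        _ = (starRingEnd ℂ) (⟪m, ∫ g, φ g ∂ν⟫_ℂ) := by rw [integral_inner hφν m]
        _ = ⟪(∫ g, φ g ∂ν), m⟫_ℂ := inner_conj_symm _ _
    rw [integral_re hφm_int, h1, hφνint]
    exact inner_self_eq_norm_sq m
  have hξnorm2 : ∀ g, ‖ξ g‖ ^ 2 = ‖φ g‖ ^ 2 - 2 * RCLike.re (⟪φ g, m⟫_ℂ) + ‖m‖ ^ 2 :=
    fun g => norm_sub_sq (𝕜 := ℂ) _ _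
  have hξ2ν : Integrable (fun g => ‖ξ g‖ ^ 2) ν := by
    rw [show (fun g => ‖ξ g‖ ^ 2)
        = fun g => ‖φ g‖ ^ 2 - 2 * RCLike.re (⟪φ g, m⟫_ℂ) + ‖m‖ ^ 2 from funext hξnorm2]
    have hint1 : Integrable (fun g => ‖φ g‖ ^ 2 - 2 * RCLike.re (⟪φ g, m⟫_ℂ)) ν :=
      hφ2ν.sub (hinnerν.const_mul 2)
    exact hint1.add (integrable_const _)
  have hξ2val : ∫ g, ‖ξ g‖ ^ 2 ∂ν ≤ I⁻¹ * (C ^ 2 * ∫ g, ‖F g‖ ^ 2 ∂μ) := by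
    have hsplit : ∫ g, ‖ξ g‖ ^ 2 ∂ν = (∫ g, ‖φ g‖ ^ 2 ∂ν) - ‖m‖ ^ 2 := by
      rw [show (fun g => ‖ξ g‖ ^ 2)
          = fun g => ‖φ g‖ ^ 2 - 2 * RCLike.re (⟪φ g, m⟫_ℂ) + ‖m‖ ^ 2 from funext hξnorm2]
      have hint1 : Integrable (fun g => ‖φ g‖ ^ 2 - 2 * RCLike.re (⟪φ g, m⟫_ℂ)) ν :=
        hφ2ν.sub (hinnerν.const_mul 2)
      have hint2 : Integrable (fun g => 2 * RCLike.re (⟪φ g, m⟫_ℂ)) ν := hinnerν.const_mul 2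
      rw [integral_add hint1 (integrable_const _),
        integral_sub hφ2ν hint2, integral_const_mul, hinnerval,
        integral_const, probReal_univ, one_smul]
      ring
    rw [hsplit]
    have := sq_nonneg ‖m‖
    linarith [hφ2val]
  -- transfer to P
  have hae : ∀ᵐ ω ∂P, ∀ k : Fin K, F (gs k ω) • f (gs k ω) = φ (gs k ω) := by
    rw [MeasureTheory.ae_all_iff]
    intro k
    have h1 : (fun g => F g • f g) =ᵐ[Measure.map (gs k) P] φ := by
      rw [hlaw k]; exact hφae.filter_mono hνac.ae_le
    exact ae_eq_comp (hgsmeas k).aemeasurable h1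
  have hLHS : ∫ ω, ‖((I / (K:ℝ)) • ∑ k, F (gs k ω) • f (gs k ω)) - VstarψF‖ ^ 2 ∂P
      = ∫ ω, (I / (K:ℝ)) ^ 2 * ‖∑ k, ξ (gs k ω)‖ ^ 2 ∂P := by
    apply integral_congr_ae
    filter_upwards [hae] with ω hω
    have h1 : (∑ k, F (gs k ω) • f (gs k ω)) = ∑ k, φ (gs k ω) :=
      Finset.sum_congr rfl fun k _ => hω k
    have h3 : ∑ k, ξ (gs k ω) = (∑ k, φ (gs k ω)) - (K:ℝ) • m := by
      rw [show (∑ k, ξ (gs k ω)) = ∑ k, (φ (gs k ω) - m) from rfl,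
        Finset.sum_sub_distrib, Finset.sum_const, Finset.card_univ, Fintype.card_fin,
        ← Nat.cast_smul_eq_nsmul ℝ]
    have h2 : ((I / (K:ℝ)) • ∑ k, φ (gs k ω)) - VstarψF = (I / (K:ℝ)) • ∑ k, ξ (gs k ω) := by
      rw [h3, smul_sub, smul_smul]
      have h4 : I / (K:ℝ) * (K:ℝ) = I := by field_simp
      rw [h4, hmdef, smul_smul, mul_inv_cancel₀ hI.ne', one_smul]
    rw [h1, h2, norm_smul, mul_pow, Real.norm_of_nonneg (le_of_lt (div_pos hI hK'))]
  have hξ2sm : StronglyMeasurable (fun g => ‖ξ g‖ ^ 2) :=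
    (continuous_pow 2).comp_stronglyMeasurable hξsm.norm
  have hZ2int : ∀ k : Fin K, Integrable (fun ω => ‖ξ (gs k ω)‖ ^ 2) P := fun k =>
    (mc_comp (hgsmeas k) (hlaw k) hξ2sm).2 hξ2ν
  have hZ2val : ∀ k : Fin K, ∫ ω, ‖ξ (gs k ω)‖ ^ 2 ∂P = ∫ g, ‖ξ g‖ ^ 2 ∂ν := fun k =>
    (mc_comp (hgsmeas k) (hlaw k) hξ2sm).1
  have hinner2sm : StronglyMeasurable (fun p : G × G => (⟪ξ p.1, ξ p.2⟫_ℂ)) :=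
    Continuous.comp_stronglyMeasurable continuous_inner
      ((hξsm.comp_measurable measurable_fst).prodMk (hξsm.comp_measurable measurable_snd))
  have hresm : StronglyMeasurable (fun p : G × G => RCLike.re (⟪ξ p.1, ξ p.2⟫_ℂ)) :=
    RCLike.continuous_re.comp_stronglyMeasurable hinner2sm
  have hprodint : Integrable (fun p : G × G => (⟪ξ p.1, ξ p.2⟫_ℂ)) (ν.prod ν) := by
    apply Integrable.mono' (Integrable.mul_prod hξν.norm hξν.norm)
      hinner2sm.aestronglyMeasurable
    exact Filter.Eventually.of_forall fun p => norm_inner_le_norm _ _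
  have hpair : ∀ j k : Fin K, j ≠ k →
      Measure.map (fun ω => (gs j ω, gs k ω)) P = ν.prod ν := by
    intro j k hjk
    have h := (ProbabilityTheory.indepFun_iff_map_prod_eq_prod_map_map
      (hgsmeas j).aemeasurable (hgsmeas k).aemeasurable).1 (hgsindep.indepFun hjk)
    rw [h, hlaw j, hlaw k]
  have hcross : ∀ j k : Fin K, j ≠ k →
      ∫ ω, RCLike.re (⟪ξ (gs j ω), ξ (gs k ω)⟫_ℂ) ∂P = 0 := by
    intro j k hjk
    have h1 : ∫ ω, RCLike.re (⟪ξ (gs j ω), ξ (gs k ω)⟫_ℂ) ∂P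
        = ∫ p : G × G, RCLike.re (⟪ξ p.1, ξ p.2⟫_ℂ) ∂(ν.prod ν) := by
      rw [← hpair j k hjk, integral_map ((hgsmeas j).prodMk (hgsmeas k)).aemeasurable
        hresm.aestronglyMeasurable]
    rw [h1, integral_prod _ hprodint.re]
    have h2 : ∀ x : G, ∫ y, RCLike.re (⟪ξ x, ξ y⟫_ℂ) ∂ν = 0 := by
      intro x
      have hxint : Integrable (fun y => (⟪ξ x, ξ y⟫_ℂ)) ν := by
        apply Integrable.mono' (hξν.norm.const_mul ‖ξ x‖)
          (((continuous_const.inner continuous_id).comp_stronglyMeasurable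
            hξsm).aestronglyMeasurable)
        exact Filter.Eventually.of_forall fun y => norm_inner_le_norm _ _
      rw [integral_re hxint, integral_inner hξν, hξmean, inner_zero_right, map_zero]
    simp only [h2, integral_zero]
  have htermint : ∀ j k : Fin K,
      Integrable (fun ω => RCLike.re (⟪ξ (gs j ω), ξ (gs k ω)⟫_ℂ)) P := by
    intro j k
    by_cases hjk : j = k
    · subst hjk
      have heq : (fun ω => RCLike.re (⟪ξ (gs j ω), ξ (gs j ω)⟫_ℂ))
          = fun ω => ‖ξ (gs j ω)‖ ^ 2 := funext fun ω => inner_self_eq_norm_sq _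
      rw [heq]; exact hZ2int j
    · have h2 : Integrable (fun p : G × G => RCLike.re (⟪ξ p.1, ξ p.2⟫_ℂ))
          (Measure.map (fun ω => (gs j ω, gs k ω)) P) := by
        rw [hpair j k hjk]; exact hprodint.re
      exact (integrable_map_measure hresm.aestronglyMeasurable
        ((hgsmeas j).prodMk (hgsmeas k)).aemeasurable).1 h2
  have hsumexp : ∫ ω, ‖∑ k, ξ (gs k ω)‖ ^ 2 ∂P
      = ∑ j : Fin K, ∑ k : Fin K, ∫ ω, RCLike.re (⟪ξ (gs j ω), ξ (gs k ω)⟫_ℂ) ∂P := by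
    have hpt : ∀ ω, ‖∑ k, ξ (gs k ω)‖ ^ 2
        = ∑ j : Fin K, ∑ k : Fin K, RCLike.re (⟪ξ (gs j ω), ξ (gs k ω)⟫_ℂ) := by
      intro ω
      rw [← inner_self_eq_norm_sq (𝕜 := ℂ), sum_inner, map_sum]
      refine Finset.sum_congr rfl fun j _ => ?_
      rw [inner_sum, map_sum]
    simp_rw [hpt]
    rw [integral_finset_sum _ (fun j _ => integrable_finset_sum _ (fun k _ => htermint j k))]
    refine Finset.sum_congr rfl fun j _ => ?_
    rw [integral_finset_sum _ (fun k _ => htermint j k)]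
  have hdiagsum : ∀ j : Fin K, ∑ k : Fin K, ∫ ω, RCLike.re (⟪ξ (gs j ω), ξ (gs k ω)⟫_ℂ) ∂P
      = ∫ g, ‖ξ g‖ ^ 2 ∂ν := by
    intro j
    rw [Finset.sum_eq_single j]
    · have heq : (fun ω => RCLike.re (⟪ξ (gs j ω), ξ (gs j ω)⟫_ℂ))
          = fun ω => ‖ξ (gs j ω)‖ ^ 2 := funext fun ω => inner_self_eq_norm_sq _
      rw [heq, hZ2val j]
    · intro k _ hkj; exact hcross j k (Ne.symm hkj)
    · intro h; exact absurd (Finset.mem_univ j) h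
  -- final assembly
  set D : ℝ := ∫ g, ‖ξ g‖ ^ 2 ∂ν with hDdef
  have hD0 : 0 ≤ D := integral_nonneg fun g => sq_nonneg _
  have hF20 : 0 ≤ ∫ g, ‖F g‖ ^ 2 ∂μ := integral_nonneg fun g => sq_nonneg _
  rw [hLHS, integral_const_mul, hsumexp]
  have hsums : ∑ j : Fin K, ∑ k : Fin K, ∫ ω, RCLike.re (⟪ξ (gs j ω), ξ (gs k ω)⟫_ℂ) ∂P
      = (K:ℝ) * D := by
    rw [Finset.sum_congr rfl (fun j _ => hdiagsum j), Finset.sum_const, Finset.card_univ,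
      Fintype.card_fin, nsmul_eq_mul]
  rw [hsums]
  have hstep1 : (I / (K:ℝ)) ^ 2 * ((K:ℝ) * D)
      ≤ (I / (K:ℝ)) ^ 2 * ((K:ℝ) * (I⁻¹ * (C ^ 2 * ∫ g, ‖F g‖ ^ 2 ∂μ))) := by
    have := hξ2val
    gcongr
  refine hstep1.trans ?_
  have heq2 : (I / (K:ℝ)) ^ 2 * ((K:ℝ) * (I⁻¹ * (C ^ 2 * ∫ g, ‖F g‖ ^ 2 ∂μ)))
      = (I / (K:ℝ)) * (C ^ 2 * ∫ g, ‖F g‖ ^ 2 ∂μ) := by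
    field_simp
  rw [heq2]
  have h1B : (1:ℝ) ≤ A⁻¹ * B := by
    rw [inv_mul_eq_div]
    rw [le_div_iff₀ hA]
    linarith
  calc (I / (K:ℝ)) * (C ^ 2 * ∫ g, ‖F g‖ ^ 2 ∂μ)
      = 1 * ((I / (K:ℝ)) * (C ^ 2 * ∫ g, ‖F g‖ ^ 2 ∂μ)) := by ring
    _ ≤ (A⁻¹ * B) * ((I / (K:ℝ)) * (C ^ 2 * ∫ g, ‖F g‖ ^ 2 ∂μ)) := by
        apply mul_le_mul_of_nonneg_right h1B
        exact mul_nonneg (le_of_lt (div_pos hI hK')) (mul_nonneg (sq_nonneg C) hF20)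
    _ = (I / (K:ℝ)) * A⁻¹ * B * C ^ 2 * ∫ g, ‖F g‖ ^ 2 ∂μ := by ring
end

section
/- Let f : G → H be a continuous frame of a separable Hilbert space H over a σ-finite measure space G. Then for every F ∈ L²(G), the function g ↦ F(g) f_g is weakly integrable, and the adjoint of the analysis operator satisfies V_f*[F] = weak-∫_G F(g) f_g dg, i.e., ⟨q, V_f*F⟩ = ∫_G conj(F(g)) ⟨q, f_g⟩ dg for all q ∈ H. -/
open MeasureTheory ContinuousLinearMap
open scoped InnerProductSpace

/-- **synthesis operator as weak integral.** For a continuous frame `f : G → H`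
with analysis operator `V`, for every `F ∈ L²(G)` the map `g ↦ F(g) f_g` is weakly
integrable and the adjoint (synthesis) operator satisfies
`⟨q, V*F⟩ = ∫ conj(F(g)) ⟨q, f_g⟩ dg` for all `q ∈ H`.  (In Mathlib's convention, where the
inner product is conjugate-linear in the first argument, this reads
`⟪V*F, q⟫ = ∫ conj(F(g)) ⟪f_g, q⟫ dg`.) -/
theorem synthesis_eq_weak_integral
    {H : Type*} [NormedAddCommGroup H] [InnerProductSpace ℂ H] [CompleteSpace H]
    {G : Type*} [MeasurableSpace G] (μ : Measure G) [SigmaFinite μ]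
    (f : G → H) (A B : ℝ) (hA : 0 < A) (hAB : A ≤ B)
    (V : H →L[ℂ] Lp ℂ 2 μ)
    (hV : ∀ s : H, (V s : G → ℂ) =ᵐ[μ] fun g => ⟪f g, s⟫_ℂ)
    (hlow : ∀ s : H, A * ‖s‖ ^ 2 ≤ ‖V s‖ ^ 2)
    (hup : ∀ s : H, ‖V s‖ ^ 2 ≤ B * ‖s‖ ^ 2) :
    ∀ F : Lp ℂ 2 μ,
      (∀ q : H, Integrable (fun g => (starRingEnd ℂ) ((F : G → ℂ) g) * ⟪f g, q⟫_ℂ) μ) ∧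
      (∀ q : H, (⟪adjoint V F, q⟫_ℂ : ℂ) =
        ∫ g, (starRingEnd ℂ) ((F : G → ℂ) g) * ⟪f g, q⟫_ℂ ∂μ) := by
  intro F
  have hint : ∀ q : H,
      Integrable (fun g => (starRingEnd ℂ) ((F : G → ℂ) g) * ⟪f g, q⟫_ℂ) μ := by
    intro q
    have h1 : Integrable (fun g => ⟪(F : G → ℂ) g, (V q : G → ℂ) g⟫_ℂ) μ :=
      L2.integrable_inner F (V q)
    refine h1.congr ?_
    filter_upwards [hV q] with g hg
    simp [hg, RCLike.inner_apply]; ring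
  refine ⟨hint, fun q => ?_⟩
  have h2 : (⟪adjoint V F, q⟫_ℂ : ℂ) = ⟪F, V q⟫_ℂ :=
    ContinuousLinearMap.adjoint_inner_left V q F
  rw [h2, L2.inner_def]
  refine integral_congr_ae ?_
  filter_upwards [hV q] with g hg
  simp [hg, RCLike.inner_apply]; ring
end
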